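/- Let n be a nonnegative integer and let ρ be a complex number with ρ ≠ 0 and ρ ≠ 1. Then the Apostol-Bernoulli polynomial has the representation 𝓑_n(ω;ρ) = Σ_{j=0}^{n} Σ_{s=0}^{j−1} (−1)^{j−1} · (C(n,j)/C(j−1,s)) · (j/(ρ−1)^j) · s! · B_s^{j−1}(ρ) · S₂(j−1,s) · ω^{n−j}, where B_s^{j−1}(ρ) is the Bernstein basis function. -/

import Mathlib

open Finset Nat

/-- The Apostol-Bernoulli polynomials `𝓑_n(ω;ρ)`, defined by the generating function
`t e^{ωt} / (ρ e^t - 1) = Σ_{n≥0} 𝓑_n(ω;ρ) t^n / n!` (as a formal power series). -/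
noncomputable def apostolBernoulliPoly (n : ℕ) (ω ρ : ℂ) : ℂ :=
  (n ! : ℂ) * PowerSeries.coeff (R := ℂ) n
    (PowerSeries.X * PowerSeries.rescale ω (PowerSeries.exp ℂ) *
      (ρ • PowerSeries.exp ℂ - 1)⁻¹)

/-- The Bernstein basis functions `B_d^k(ω) = C(k,d) ω^d (1−ω)^{k−d}` for `0 ≤ d ≤ k`,
and `0` otherwise. -/
noncomputable def bernsteinC (k d : ℕ) (ω : ℂ) : ℂ :=
  if d ≤ k then (k.choose d : ℂ) * ω ^ d * (1 - ω) ^ (k - d) else 0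

/-- The Stirling numbers of the second kind `S₂(n,c)`, defined by
`(e^t - 1)^c = Σ_{n≥0} c! S₂(n,c) t^n / n!`. -/
noncomputable def stirling2 (n c : ℕ) : ℂ :=
  ((n ! : ℂ) / (c ! : ℂ)) * PowerSeries.coeff (R := ℂ) n ((PowerSeries.exp ℂ - 1) ^ c)

open PowerSeries in
private lemma geom_coeff (u : ℂ⟦X⟧) (hu : constantCoeff (R := ℂ) u = 0) (m : ℕ) :
    (coeff (R := ℂ) m) (1 - u)⁻¹ = ∑ s ∈ range (m+1), coeff (R := ℂ) m (u ^ s) := by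
  have hunit : constantCoeff (R := ℂ) (1 - u) ≠ 0 := by simp [hu]
  have hdvd : (X : ℂ⟦X⟧) ∣ u := X_dvd_iff.mpr hu
  have hgeom : (1 - u) * (∑ s ∈ range (m+1), u ^ s) = 1 - u ^ (m+1) := by
    have := geom_sum_mul u (m+1)
    linear_combination -this
  have key : (∑ s ∈ range (m+1), u ^ s) = (1 - u)⁻¹ - (1 - u)⁻¹ * u ^ (m+1) := by
    have h2 := PowerSeries.inv_mul_cancel (1 - u) hunit
    calc (∑ s ∈ range (m+1), u ^ s) = (1-u)⁻¹ * ((1-u) * (∑ s ∈ range (m+1), u ^ s)) := by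
          rw [← mul_assoc, h2, one_mul]
      _ = (1 - u)⁻¹ - (1 - u)⁻¹ * u ^ (m+1) := by rw [hgeom]; ring
  have hz : coeff (R := ℂ) m ((1 - u)⁻¹ * u ^ (m+1)) = 0 := by
    have : (X : ℂ⟦X⟧) ^ (m+1) ∣ (1 - u)⁻¹ * u ^ (m+1) :=
      Dvd.dvd.mul_left (pow_dvd_pow_of_dvd hdvd (m+1)) _
    exact (X_pow_dvd_iff.mp this) m (lt_add_one m)
  have := congrArg (coeff (R := ℂ) m) key
  simp only [map_sub, hz, sub_zero, map_sum] at this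
  exact this.symm

open PowerSeries in
private lemma invF_coeff (ρ : ℂ) (hρ1 : ρ ≠ 1) (m : ℕ) :
    coeff (R := ℂ) m (ρ • PowerSeries.exp ℂ - 1)⁻¹ =
      ∑ s ∈ range (m+1),
        (ρ - 1)⁻¹ * (-ρ / (ρ - 1)) ^ s * coeff (R := ℂ) m ((PowerSeries.exp ℂ - 1) ^ s) := by
  have hρ1' : ρ - 1 ≠ 0 := sub_ne_zero.mpr hρ1
  set c : ℂ := -ρ / (ρ - 1) with hc
  set u : ℂ⟦X⟧ := C (R := ℂ) c * (PowerSeries.exp ℂ - 1) with hudef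
  have hu : constantCoeff (R := ℂ) u = 0 := by
    simp [hudef, PowerSeries.constantCoeff_exp]
  have hfact : ρ • PowerSeries.exp ℂ - 1 = C (R := ℂ) (ρ - 1) * (1 - u) := by
    rw [smul_eq_C_mul, hudef]
    have : C (R := ℂ) (ρ - 1) * C (R := ℂ) c = C (R := ℂ) (-ρ) := by
      rw [← map_mul]
      congr 1
      rw [hc]; field_simp
    rw [mul_sub, mul_one, ← mul_assoc, this]
    simp only [map_neg, map_sub, map_one]
    ring
  rw [hfact, PowerSeries.mul_inv_rev, PowerSeries.C_inv, PowerSeries.coeff_mul_C,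
    geom_coeff u hu m, Finset.sum_mul]
  refine Finset.sum_congr rfl fun s _ => ?_
  rw [hudef, mul_pow, ← map_pow, PowerSeries.coeff_C_mul]
  ring

set_option maxHeartbeats 1600000 in
theorem stmt18 (n : ℕ) (ρ : ℂ) (hρ0 : ρ ≠ 0) (hρ1 : ρ ≠ 1) (ω : ℂ) :
    apostolBernoulliPoly n ω ρ =
      ∑ j ∈ Finset.range (n + 1), ∑ s ∈ Finset.range j,
        (-1 : ℂ) ^ (j - 1) * ((n.choose j : ℂ) / ((j - 1).choose s : ℂ)) *
          ((j : ℂ) / (ρ - 1) ^ j) * (s ! : ℂ) * bernsteinC (j - 1) s ρ *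
          stirling2 (j - 1) s * ω ^ (n - j) := by
  have hρ1' : ρ - 1 ≠ 0 := sub_ne_zero.mpr hρ1
  obtain _ | N := n
  · simp [apostolBernoulliPoly, mul_assoc, PowerSeries.coeff_zero_eq_constantCoeff]
  set F := (ρ • PowerSeries.exp ℂ - 1)⁻¹ with hF
  -- LHS
  have hL : apostolBernoulliPoly (N+1) ω ρ =
      ∑ k ∈ range (N+1),
        ((N+1)! : ℂ) * (ω ^ (N - k) / ((N - k)! : ℂ)) * PowerSeries.coeff (R := ℂ) k F := by
    rw [apostolBernoulliPoly, mul_assoc PowerSeries.X, PowerSeries.coeff_succ_X_mul, PowerSeries.coeff_mul,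
      Finset.Nat.sum_antidiagonal_eq_sum_range_succ_mk, Finset.mul_sum]
    rw [← Finset.sum_range_reflect]
    refine Finset.sum_congr rfl fun k hk => ?_
    rw [Finset.mem_range] at hk
    have h1 : N - (N - k) = k := by omega
    simp only [Nat.succ_sub_one]
    rw [PowerSeries.coeff_rescale, PowerSeries.coeff_exp, h1]
    push_cast
    ring
  rw [hL]
  -- RHS: peel off j = 0 and reindex
  conv_rhs => rw [Finset.sum_range_succ']
  rw [Finset.range_zero, Finset.sum_empty, add_zero]
  refine Finset.sum_congr rfl fun i hi => ?_
  rw [Finset.mem_range] at hi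
  rw [invF_coeff ρ hρ1 i, Finset.mul_sum]
  refine Finset.sum_congr rfl fun s hs => ?_
  rw [Finset.mem_range, Nat.lt_succ_iff] at hs
  have hle : i + 1 ≤ N + 1 := by omega
  have hni : N + 1 - (i + 1) = N - i := by omega
  simp only [Nat.add_sub_cancel, hni]
  rw [bernsteinC, if_pos hs, stirling2]
  obtain ⟨t, rfl⟩ : ∃ t, i = s + t := ⟨i - s, by omega⟩
  have h2 : s + t - s = t := by omega
  rw [h2, Nat.cast_choose ℂ hle, hni]
  have h1ρ : (1:ℂ) - ρ ≠ 0 := sub_ne_zero.mpr (Ne.symm hρ1)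
  have hC : ((s+t).choose s : ℂ) ≠ 0 :=
    Nat.cast_ne_zero.mpr (Nat.choose_pos hs).ne'
  have hA : (-ρ/(ρ-1)) ^ s = ((-1:ℂ)) ^ s * ρ ^ s / (ρ-1) ^ s := by
    rw [div_pow, neg_pow]
  have hB : ((-1:ℂ)) ^ (s+t) = (-1) ^ s * (-1) ^ t := pow_add _ _ _
  have hC2 : ((ρ-1):ℂ) ^ (s+t+1) = (ρ-1) ^ s * (ρ-1) ^ t * (ρ-1) := by
    rw [pow_add, pow_add, pow_one]
  have hneg : ((-1:ℂ)) ^ t = (ρ-1) ^ t / (1-ρ) ^ t := by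
    rw [← div_pow]
    congr 1
    field_simp
    ring
  have hfs : (s ! : ℂ) ≠ 0 := Nat.cast_ne_zero.mpr (Nat.factorial_ne_zero s)
  have hft : (t ! : ℂ) ≠ 0 := Nat.cast_ne_zero.mpr (Nat.factorial_ne_zero t)
  have hfst : (((s + t) : ℕ)! : ℂ) ≠ 0 := Nat.cast_ne_zero.mpr (Nat.factorial_ne_zero _)
  have hfstt : (((s + t + 1) : ℕ)! : ℂ) ≠ 0 := Nat.cast_ne_zero.mpr (Nat.factorial_ne_zero _)
  have hfN : (((N - (s + t)) : ℕ)! : ℂ) ≠ 0 := Nat.cast_ne_zero.mpr (Nat.factorial_ne_zero _)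
  have hst1 : ((s:ℂ) + t + 1) ≠ 0 := by
    have : ((s+t+1 : ℕ) : ℂ) ≠ 0 := Nat.cast_ne_zero.mpr (by omega)
    push_cast at this
    exact this
  set ν := N - (s + t) with hν
  set E := (PowerSeries.coeff (R := ℂ) (s + t)) ((PowerSeries.exp ℂ - 1) ^ s) with hE
  have hfν : ((ν)! : ℂ) ≠ 0 := Nat.cast_ne_zero.mpr (Nat.factorial_ne_zero _)
  have hp1 : ((1:ℂ) - ρ) ^ t ≠ 0 := pow_ne_zero _ h1ρ
  have hp2 : (ρ - (1:ℂ)) ^ s ≠ 0 := pow_ne_zero _ hρ1'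
  have hp3 : (ρ - (1:ℂ)) ^ t ≠ 0 := pow_ne_zero _ hρ1'
  have lemS : ((-1:ℂ)) ^ (s+t) * (1-ρ) ^ t / (ρ-1) ^ (s+t+1) = (-1) ^ s / ((ρ-1) ^ s * (ρ-1)) := by
    rw [hB, hC2, hneg]
    field_simp
  have lemF : (↑(N + 1)! / ((↑(s + t + 1)! : ℂ) * ↑ν !) / ↑((s + t).choose s)) * ↑(s + t + 1) *
      ↑s ! * ↑((s + t).choose s) * (↑(s + t)! / ↑s !) = (↑(N + 1)! : ℂ) / ↑ν ! := by
    have hfac : (((s+t+1):ℕ)! : ℂ) = ((s+t+1 : ℕ) : ℂ) * (((s+t):ℕ)! : ℂ) := by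
      rw [Nat.factorial_succ]; exact_mod_cast Nat.cast_mul _ _
    have hst1'' : ((s+t+1 : ℕ) : ℂ) ≠ 0 := Nat.cast_ne_zero.mpr (by omega)
    rw [hfac]
    field_simp
  trans ((↑(N + 1)! : ℂ) / ↑ν ! * ω ^ ν * E * ρ ^ s * ((-1:ℂ) ^ s / ((ρ-1) ^ s * (ρ-1))))
  · rw [hA]
    field_simp
  · rw [← lemS, ← lemF]
    ring
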